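/- arXiv:1411.5556 — 2 statements merged into one kernel-verified Lean document; each statement's English description precedes it below -/
import Mathlib

section
/- Let c ∈ C¹_T(ℝ) and φ ∈ C¹(ℝ) with φ(t+T) = φ(t)+T, and define [Bv](t) = c(t) v(φ(t)) on C¹_T(ℝ). Suppose q₀ := sup_t |c(t)| < 1 and q₁ := sup_t |c(t) φ′(t)| < 1. Then I − B is bijective from C¹_T(ℝ) to C¹_T(ℝ). -/
open Filter Topology Set

namespace Stmt6Aux

noncomputable def iter (c φ g : ℝ → ℝ) : ℕ → ℝ → ℝ
  | 0 => g
  | n+1 => fun t => c t * iter c φ g n (φ t) + g t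

noncomputable def diter (c φ g : ℝ → ℝ) : ℕ → ℝ → ℝ
  | 0 => deriv g
  | n+1 => fun t => deriv c t * iter c φ g n (φ t)
      + c t * deriv φ t * diter c φ g n (φ t) + deriv g t

lemma periodic_bound {f : ℝ → ℝ} {T : ℝ} (hT : 0 < T) (hf : Continuous f)
    (hper : Function.Periodic f T) : ∃ M, 0 ≤ M ∧ ∀ t, |f t| ≤ M := by
  obtain ⟨M, hM⟩ := (isCompact_Icc (a := (0:ℝ)) (b := T)).exists_bound_of_continuousOn
    hf.continuousOn
  refine ⟨max M 0, le_max_right _ _, fun t => ?_⟩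
  obtain ⟨y, hy, hfy⟩ := hper.exists_mem_Ico₀ hT t
  rw [hfy]
  calc |f y| ≤ M := by simpa [Real.norm_eq_abs] using hM y (Ico_subset_Icc_self hy)
  _ ≤ max M 0 := le_max_left _ _

lemma periodic_deriv {f : ℝ → ℝ} {T : ℝ} (hper : Function.Periodic f T) :
    Function.Periodic (deriv f) T := by
  intro t
  have : (fun x => f (x + T)) = f := funext fun x => hper x
  calc deriv f (t + T) = deriv (fun x => f (x + T)) t := (deriv_comp_add_const f T t).symm
  _ = deriv f t := by rw [this]

end Stmt6Aux

open Stmt6Aux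

/-- If q₀ = sup|c| < 1 and q₁ = sup|c·φ′| < 1, then I − B with
[Bv](t) = c(t) v(φ(t)) is bijective on C¹_T(ℝ): for every C¹ T-periodic g
there is a unique C¹ T-periodic v with v = Bv + g. -/
theorem stmt_6 (T : ℝ) (hT : 0 < T) (c φ : ℝ → ℝ) (q₀ q₁ : ℝ)
    (hc : ContDiff ℝ 1 c) (hc_per : Function.Periodic c T)
    (hφ : ContDiff ℝ 1 φ) (hφT : ∀ t, φ (t + T) = φ t + T)
    (hq₀ : ∀ t, |c t| ≤ q₀) (hq₀1 : q₀ < 1)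
    (hq₁ : ∀ t, |c t * deriv φ t| ≤ q₁) (hq₁1 : q₁ < 1) :
    ∀ g : ℝ → ℝ, ContDiff ℝ 1 g → Function.Periodic g T →
      ∃! v : ℝ → ℝ, ContDiff ℝ 1 v ∧ Function.Periodic v T ∧
        ∀ t, v t = c t * v (φ t) + g t := by
  intro g hg hgper
  -- basic positivity facts
  have hq₀0 : 0 ≤ q₀ := le_trans (abs_nonneg _) (hq₀ 0)
  have hq₁0 : 0 ≤ q₁ := le_trans (abs_nonneg _) (hq₁ 0)
  set r : ℝ := max q₀ q₁ with hr_def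
  have hr0 : 0 ≤ r := le_trans hq₀0 (le_max_left _ _)
  have hr1 : r < 1 := max_lt hq₀1 hq₁1
  set s : ℝ := (r + 1) / 2 with hs_def
  have hrs : r < s := by rw [hs_def]; linarith
  have hs1 : s < 1 := by rw [hs_def]; linarith
  have hs0 : 0 ≤ s := by rw [hs_def]; linarith
  -- continuity and boundedness facts
  have hgc : Continuous g := hg.continuous
  have hdc_per : Function.Periodic (deriv c) T := periodic_deriv hc_per
  have hdg_per : Function.Periodic (deriv g) T := periodic_deriv hgper
  have hdφ_per : Function.Periodic (deriv φ) T := by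
    intro t
    have h1 : (fun x => φ (x + T)) = fun x => φ x + T := funext fun x => hφT x
    calc deriv φ (t + T) = deriv (fun x => φ (x + T)) t := (deriv_comp_add_const φ T t).symm
    _ = deriv φ t := by rw [h1]; simp
  obtain ⟨Kg, hKg0, hKg⟩ := periodic_bound hT hgc hgper
  obtain ⟨Kc', hKc'0, hKc'⟩ := periodic_bound hT (hc.continuous_deriv le_rfl) hdc_per
  obtain ⟨Kg', hKg'0, hKg'⟩ := periodic_bound hT (hg.continuous_deriv le_rfl) hdg_per
  -- properties of the iterates
  have hC1 : ∀ n, ContDiff ℝ 1 (iter c φ g n) := by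
    intro n; induction n with
    | zero => exact hg
    | succ n ih => exact (hc.mul (ih.comp hφ)).add hg
  have hper : ∀ n, Function.Periodic (iter c φ g n) T := by
    intro n; induction n with
    | zero => exact hgper
    | succ n ih =>
      intro t
      show c (t + T) * iter c φ g n (φ (t + T)) + g (t + T)
          = c t * iter c φ g n (φ t) + g t
      rw [hc_per t, hgper t, hφT t, ih (φ t)]
  have hderiv : ∀ n t, HasDerivAt (iter c φ g n) (diter c φ g n t) t := by
    intro n; induction n with
    | zero => exact fun t => (hg.differentiable one_ne_zero t).hasDerivAt
    | succ n ih =>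
      intro t
      have h1 : HasDerivAt c (deriv c t) t := (hc.differentiable one_ne_zero t).hasDerivAt
      have h2 : HasDerivAt φ (deriv φ t) t := (hφ.differentiable one_ne_zero t).hasDerivAt
      have h4 : HasDerivAt (fun t => iter c φ g n (φ t))
          (diter c φ g n (φ t) * deriv φ t) t := (ih (φ t)).comp t h2
      have h5 : HasDerivAt g (deriv g t) t := (hg.differentiable one_ne_zero t).hasDerivAt
      have : HasDerivAt (iter c φ g (n+1))
          (deriv c t * iter c φ g n (φ t) + c t * (diter c φ g n (φ t) * deriv φ t) + deriv g t) t :=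
        (h1.mul h4).add h5
      convert this using 1
      show deriv c t * iter c φ g n (φ t) + c t * deriv φ t * diter c φ g n (φ t)
          + deriv g t = _
      ring
  have hditer_eq : ∀ n, diter c φ g n = deriv (iter c φ g n) :=
    fun n => funext fun t => ((hderiv n t).deriv).symm
  have hdcont : ∀ n, Continuous (diter c φ g n) := by
    intro n; rw [hditer_eq n]; exact (hC1 n).continuous_deriv le_rfl
  have hdper : ∀ n, Function.Periodic (diter c φ g n) T := by
    intro n; rw [hditer_eq n]; exact periodic_deriv (hper n)
  -- geometric bounds
  set A0 : ℝ := q₀ * Kg with hA0_def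
  have hA00 : 0 ≤ A0 := mul_nonneg hq₀0 hKg0
  have hA : ∀ n t, |iter c φ g (n+1) t - iter c φ g n t| ≤ A0 * q₀ ^ n := by
    intro n; induction n with
    | zero =>
      intro t
      show |c t * g (φ t) + g t - g t| ≤ A0 * q₀ ^ 0
      rw [add_sub_cancel_right, abs_mul, pow_zero, mul_one]
      exact mul_le_mul (hq₀ t) (hKg _) (abs_nonneg _) hq₀0
    | succ n ih =>
      intro t
      have : iter c φ g (n+2) t - iter c φ g (n+1) t
          = c t * (iter c φ g (n+1) (φ t) - iter c φ g n (φ t)) := by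
        show c t * iter c φ g (n+1) (φ t) + g t - (c t * iter c φ g n (φ t) + g t) = _
        ring
      rw [this, abs_mul]
      calc |c t| * |iter c φ g (n+1) (φ t) - iter c φ g n (φ t)|
          ≤ q₀ * (A0 * q₀ ^ n) :=
            mul_le_mul (hq₀ t) (ih _) (abs_nonneg _) hq₀0
      _ = A0 * q₀ ^ (n+1) := by ring
  set E0 : ℝ := Kc' * Kg + q₁ * Kg' with hE0_def
  have hE00 : 0 ≤ E0 := add_nonneg (mul_nonneg hKc'0 hKg0) (mul_nonneg hq₁0 hKg'0)
  set M : ℝ := E0 + (Kc' * A0) / (s - r) with hM_def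
  have hsr : 0 < s - r := by linarith
  have hM0 : 0 ≤ M := add_nonneg hE00 (div_nonneg (mul_nonneg hKc'0 hA00) hsr.le)
  have hMkey : Kc' * A0 ≤ (s - r) * M := by
    have : (s - r) * M = (s - r) * E0 + Kc' * A0 := by
      rw [hM_def]; field_simp
    nlinarith [mul_nonneg hsr.le hE00]
  have hB : ∀ n t, |diter c φ g (n+1) t - diter c φ g n t| ≤ M * s ^ n := by
    intro n; induction n with
    | zero =>
      intro t
      have h1 : diter c φ g 1 t - diter c φ g 0 t
          = deriv c t * g (φ t) + c t * deriv φ t * deriv g (φ t) := by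
        show deriv c t * iter c φ g 0 (φ t) + c t * deriv φ t * diter c φ g 0 (φ t)
            + deriv g t - deriv g t = _
        show deriv c t * g (φ t) + c t * deriv φ t * deriv g (φ t) + deriv g t
            - deriv g t = _
        ring
      rw [h1, pow_zero, mul_one]
      calc |deriv c t * g (φ t) + c t * deriv φ t * deriv g (φ t)|
          ≤ |deriv c t * g (φ t)| + |c t * deriv φ t * deriv g (φ t)| := abs_add_le _ _
      _ ≤ Kc' * Kg + q₁ * Kg' := by
            rw [abs_mul, abs_mul]
            gcongr
            · exact hKc' t
            · exact hKg _
            · exact hq₁ t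
            · exact hKg' _
      _ ≤ M := by rw [hM_def, hE0_def]; nlinarith [div_nonneg (mul_nonneg hKc'0 hA00) hsr.le]
    | succ n ih =>
      intro t
      have h1 : diter c φ g (n+2) t - diter c φ g (n+1) t
          = deriv c t * (iter c φ g (n+1) (φ t) - iter c φ g n (φ t))
            + c t * deriv φ t * (diter c φ g (n+1) (φ t) - diter c φ g n (φ t)) := by
        show deriv c t * iter c φ g (n+1) (φ t)
            + c t * deriv φ t * diter c φ g (n+1) (φ t) + deriv g t
            - (deriv c t * iter c φ g n (φ t)
              + c t * deriv φ t * diter c φ g n (φ t) + deriv g t) = _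
        ring
      have hq₀s : q₀ ^ n ≤ s ^ n := pow_le_pow_left₀ hq₀0 (le_trans (le_max_left _ _) hrs.le) n
      calc |diter c φ g (n+2) t - diter c φ g (n+1) t|
          ≤ |deriv c t * (iter c φ g (n+1) (φ t) - iter c φ g n (φ t))|
            + |c t * deriv φ t * (diter c φ g (n+1) (φ t) - diter c φ g n (φ t))| := by
              rw [h1]; exact abs_add_le _ _
      _ ≤ Kc' * (A0 * q₀ ^ n) + q₁ * (M * s ^ n) := by
            rw [abs_mul, abs_mul]
            gcongr
            · exact hKc' t
            · exact hA n _
            · exact hq₁ t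
            · exact ih _
      _ ≤ M * s ^ (n+1) := by
            have hpow : (0:ℝ) ≤ s ^ n := pow_nonneg hs0 n
            have h2 : Kc' * (A0 * q₀ ^ n) ≤ (Kc' * A0) * s ^ n := by
              calc Kc' * (A0 * q₀ ^ n) = (Kc' * A0) * q₀ ^ n := by ring
              _ ≤ (Kc' * A0) * s ^ n :=
                  mul_le_mul_of_nonneg_left hq₀s (mul_nonneg hKc'0 hA00)
            have h3 : q₁ * (M * s ^ n) ≤ r * (M * s ^ n) :=
              mul_le_mul_of_nonneg_right (le_max_right _ _) (mul_nonneg hM0 hpow)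
            have h4 : (Kc' * A0) * s ^ n ≤ ((s - r) * M) * s ^ n :=
              mul_le_mul_of_nonneg_right hMkey hpow
            calc Kc' * (A0 * q₀ ^ n) + q₁ * (M * s ^ n)
                ≤ ((s - r) * M) * s ^ n + r * (M * s ^ n) := by linarith
            _ = M * s ^ (n+1) := by ring
  -- package iterates as bounded continuous functions
  have hFb : ∀ n, ∃ C, 0 ≤ C ∧ ∀ t, |iter c φ g n t| ≤ C :=
    fun n => periodic_bound hT (hC1 n).continuous (hper n)
  have hGb : ∀ n, ∃ C, 0 ≤ C ∧ ∀ t, |diter c φ g n t| ≤ C :=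
    fun n => periodic_bound hT (hdcont n) (hdper n)
  let F : ℕ → BoundedContinuousFunction ℝ ℝ := fun n =>
    BoundedContinuousFunction.ofNormedAddCommGroup (iter c φ g n) (hC1 n).continuous
      (hFb n).choose (fun t => by
        rw [Real.norm_eq_abs]; exact (hFb n).choose_spec.2 t)
  let G : ℕ → BoundedContinuousFunction ℝ ℝ := fun n =>
    BoundedContinuousFunction.ofNormedAddCommGroup (diter c φ g n) (hdcont n)
      (hGb n).choose (fun t => by
        rw [Real.norm_eq_abs]; exact (hGb n).choose_spec.2 t)
  have hFcoe : ∀ n t, F n t = iter c φ g n t := fun n t => rfl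
  have hGcoe : ∀ n t, G n t = diter c φ g n t := fun n t => rfl
  have hFcauchy : CauchySeq F := by
    apply cauchySeq_of_le_geometric q₀ A0 hq₀1
    intro n
    rw [BoundedContinuousFunction.dist_le (mul_nonneg hA00 (pow_nonneg hq₀0 n))]
    intro t
    rw [Real.dist_eq, hFcoe, hFcoe, abs_sub_comm]
    exact hA n t
  have hGcauchy : CauchySeq G := by
    apply cauchySeq_of_le_geometric s M hs1
    intro n
    rw [BoundedContinuousFunction.dist_le (mul_nonneg hM0 (pow_nonneg hs0 n))]
    intro t
    rw [Real.dist_eq, hGcoe, hGcoe, abs_sub_comm]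
    exact hB n t
  obtain ⟨V, hV⟩ := cauchySeq_tendsto_of_complete hFcauchy
  obtain ⟨W, hW⟩ := cauchySeq_tendsto_of_complete hGcauchy
  have hVU : TendstoUniformly (fun n => iter c φ g n) (⇑V) atTop :=
    BoundedContinuousFunction.tendsto_iff_tendstoUniformly.mp hV
  have hWU : TendstoUniformly (fun n => diter c φ g n) (⇑W) atTop :=
    BoundedContinuousFunction.tendsto_iff_tendstoUniformly.mp hW
  have hVpt : ∀ t, Tendsto (fun n => iter c φ g n t) atTop (𝓝 (V t)) :=
    fun t => hVU.tendsto_at t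
  -- V has derivative W everywhere
  have hVd : ∀ t, HasDerivAt (⇑V) (W t) t := fun t =>
    hasDerivAt_of_tendstoUniformly hWU
      (Eventually.of_forall fun n => hderiv n) hVpt t
  have hVC1 : ContDiff ℝ 1 (⇑V) := by
    rw [contDiff_one_iff_deriv]
    refine ⟨fun t => (hVd t).differentiableAt, ?_⟩
    have : deriv (⇑V) = ⇑W := funext fun t => (hVd t).deriv
    rw [this]; exact W.continuous
  have hVper : Function.Periodic (⇑V) T := by
    intro t
    have h1 := hVpt (t + T)
    have h2 : (fun n => iter c φ g n (t + T)) = fun n => iter c φ g n t :=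
      funext fun n => hper n t
    rw [h2] at h1
    exact tendsto_nhds_unique h1 (hVpt t)
  have hVeq : ∀ t, V t = c t * V (φ t) + g t := by
    intro t
    have h1 : Tendsto (fun n => iter c φ g (n + 1) t) atTop (𝓝 (V t)) :=
      (hVpt t).comp (tendsto_add_atTop_nat 1)
    have h2 : Tendsto (fun n => c t * iter c φ g n (φ t) + g t) atTop
        (𝓝 (c t * V (φ t) + g t)) :=
      ((tendsto_const_nhds.mul (hVpt (φ t))).add tendsto_const_nhds)
    exact tendsto_nhds_unique h1 h2
  -- conclusion
  refine ⟨⇑V, ⟨hVC1, hVper, hVeq⟩, ?_⟩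
  rintro u ⟨hu1, hu2, hu3⟩
  set d : ℝ → ℝ := fun t => u t - V t with hd_def
  have hdc : Continuous d := (hu1.continuous).sub V.continuous
  have hdper2 : Function.Periodic d T := fun t => by
    simp only [hd_def, hu2 t, hVper t]
  have hdeq : ∀ t, d t = c t * d (φ t) := by
    intro t
    simp only [hd_def]
    rw [hu3 t, hVeq t]
    ring
  obtain ⟨t₀, ht₀mem, ht₀⟩ := (isCompact_Icc (a := (0:ℝ)) (b := T)).exists_isMaxOn
    ⟨0, by constructor <;> [rfl; exact hT.le]⟩
    ((continuous_abs.comp hdc).continuousOn)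
  have hglobal : ∀ t, |d t| ≤ |d t₀| := by
    intro t
    obtain ⟨y, hy, hdy⟩ := hdper2.exists_mem_Ico₀ hT t
    rw [hdy]
    exact ht₀ (Ico_subset_Icc_self hy)
  have hzero : |d t₀| ≤ 0 := by
    have h1 : |d t₀| ≤ q₀ * |d t₀| := by
      calc |d t₀| = |c t₀| * |d (φ t₀)| := by rw [hdeq t₀, abs_mul]
      _ ≤ q₀ * |d t₀| :=
          mul_le_mul (hq₀ t₀) (hglobal (φ t₀)) (abs_nonneg _) hq₀0
    nlinarith [abs_nonneg (d t₀)]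
  funext t
  have : |d t| ≤ 0 := le_trans (hglobal t) hzero
  have : d t = 0 := abs_nonpos_iff.mp this
  simpa [hd_def, sub_eq_zero] using this
end

section
/- Let c₁, c₂ : ℝ → ℝ be continuous T-periodic functions and φ₁, φ₂ : ℝ → ℝ continuous with φ_i(t+T) = φ_i(t)+T. If c₁(t) c₂(φ₁(t)) > 1 for all t, then the operator [B′v](t) = c₁(t) c₂(φ₁(t)) v(φ₂(φ₁(t))) satisfies: I − B′ is bijective on C_T(ℝ), provided φ₂ ∘ φ₁ is a homeomorphism of ℝ; indeed the equation v = B′v + g can be rewritten as v(σ) = [c₁ c₂∘φ₁]^{-1}((φ₂∘φ₁)^{-1}(σ)) (v − g̃)((φ₂∘φ₁)^{-1}(σ)), which is a contraction on C_T(ℝ) since the coefficient has sup norm < 1. -/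
open Function Set

/-- A continuous periodic real function is bounded in norm. -/
lemma periodic_bound {T : ℝ} (hT : 0 < T) {u : ℝ → ℝ} (hu : Continuous u)
    (hp : Function.Periodic u T) : ∃ M, ∀ t, |u t| ≤ M := by
  obtain ⟨x, hx, hmax⟩ := (isCompact_Icc (a := (0:ℝ)) (b := T)).exists_isMaxOn
    ⟨0, le_refl 0, le_of_lt hT⟩ (hu.abs.continuousOn)
  refine ⟨|u x|, fun t => ?_⟩
  obtain ⟨y, hy, hyeq⟩ := hp.exists_mem_Ico₀ hT t
  rw [hyeq]
  exact hmax ⟨hy.1, le_of_lt hy.2⟩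

/-- Package a continuous periodic function as a bounded continuous function. -/
noncomputable def pBCF {T : ℝ} (hT : 0 < T) (u : ℝ → ℝ) (hu : Continuous u)
    (hp : Function.Periodic u T) : BoundedContinuousFunction ℝ ℝ :=
  BoundedContinuousFunction.ofNormedAddCommGroup u hu
    (Classical.choose (periodic_bound hT hu hp))
    (by simpa [Real.norm_eq_abs] using Classical.choose_spec (periodic_bound hT hu hp))

@[simp] lemma pBCF_apply {T : ℝ} (hT : 0 < T) (u : ℝ → ℝ) (hu : Continuous u)
    (hp : Function.Periodic u T) (x : ℝ) : pBCF hT u hu hp x = u x := rfl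

/-- The 'expanding' case of bijectivity of I − B′: if c₁(t)c₂(φ₁(t)) > 1 for
all t and φ₂ ∘ φ₁ is a homeomorphism of ℝ, then for every continuous
T-periodic g the equation v = B′v + g, [B′v](t) = c₁(t)c₂(φ₁(t))v(φ₂(φ₁(t))),
has a unique continuous T-periodic solution. -/
theorem stmt_18 (T : ℝ) (hT : 0 < T) (c₁ c₂ φ₁ φ₂ : ℝ → ℝ)
    (hc₁ : Continuous c₁) (hc₁_per : Function.Periodic c₁ T)
    (hc₂ : Continuous c₂) (hc₂_per : Function.Periodic c₂ T)
    (hφ₁ : Continuous φ₁) (hφ₁T : ∀ t, φ₁ (t + T) = φ₁ t + T)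
    (hφ₂ : Continuous φ₂) (hφ₂T : ∀ t, φ₂ (t + T) = φ₂ t + T)
    (hexp : ∀ t, 1 < c₁ t * c₂ (φ₁ t))
    (Ψ : ℝ → ℝ) (hΨ : Continuous Ψ)
    (hΨ₁ : ∀ t, Ψ (φ₂ (φ₁ t)) = t) (hΨ₂ : ∀ σ, φ₂ (φ₁ (Ψ σ)) = σ) :
    ∀ g : ℝ → ℝ, Continuous g → Function.Periodic g T →
      ∃! v : ℝ → ℝ, Continuous v ∧ Function.Periodic v T ∧
        ∀ t, v t = c₁ t * c₂ (φ₁ t) * v (φ₂ (φ₁ t)) + g t := by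
  intro g hg hgper
  -- the multiplier and its inverse
  set a : ℝ → ℝ := fun t => c₁ t * c₂ (φ₁ t) with ha_def
  have ha : Continuous a := hc₁.mul (hc₂.comp hφ₁)
  have haper : Function.Periodic a T := fun t => by
    simp only [ha_def, hc₁_per t, hφ₁T t, hc₂_per (φ₁ t)]
  have ha1 : ∀ t, 1 < a t := hexp
  have ha0 : ∀ t, a t ≠ 0 := fun t => ne_of_gt (lt_trans one_pos (ha1 t))
  set b : ℝ → ℝ := fun t => (a t)⁻¹ with hb_def
  have hb : Continuous b := ha.inv₀ ha0
  have hbper : Function.Periodic b T := fun t => by simp [hb_def, haper t]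
  have hbpos : ∀ t, 0 < b t := fun t => inv_pos.mpr (lt_trans one_pos (ha1 t))
  have hblt : ∀ t, b t < 1 := fun t => inv_lt_one_of_one_lt₀ (ha1 t)
  -- a uniform contraction constant
  obtain ⟨t₀, ht₀mem, ht₀⟩ := (isCompact_Icc (a := (0:ℝ)) (b := T)).exists_isMaxOn
    ⟨0, le_refl 0, le_of_lt hT⟩ hb.continuousOn
  set k : ℝ := b t₀ with hk_def
  have hk0 : 0 ≤ k := le_of_lt (hbpos t₀)
  have hk1 : k < 1 := hblt t₀
  have hk : ∀ t, b t ≤ k := fun t => by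
    obtain ⟨y, hy, hyeq⟩ := hbper.exists_mem_Ico₀ hT t
    rw [hyeq]; exact ht₀ ⟨hy.1, le_of_lt hy.2⟩
  -- shift properties of Φ = φ₂ ∘ φ₁ and Ψ
  have hΦT : ∀ t, φ₂ (φ₁ (t + T)) = φ₂ (φ₁ t) + T := fun t => by
    rw [hφ₁T t, hφ₂T (φ₁ t)]
  have hΨT : ∀ σ, Ψ (σ + T) = Ψ σ + T := fun σ => by
    have h1 : φ₂ (φ₁ (Ψ σ + T)) = σ + T := by rw [hΦT (Ψ σ), hΨ₂ σ]
    calc Ψ (σ + T) = Ψ (φ₂ (φ₁ (Ψ σ + T))) := by rw [h1]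
      _ = Ψ σ + T := hΨ₁ _
  -- the complete space of periodic bounded continuous functions
  set S : Set (BoundedContinuousFunction ℝ ℝ) := {f | ∀ t, f (t + T) = f t} with hS_def
  have hSclosed : IsClosed S := by
    have : S = ⋂ t : ℝ, {f : BoundedContinuousFunction ℝ ℝ | f (t + T) = f t} := by
      ext f; simp [hS_def, Set.mem_iInter]
    rw [this]
    exact isClosed_iInter fun t => isClosed_eq
      (continuous_eval_const (t + T))
      (continuous_eval_const t)
  haveI : CompleteSpace S := hSclosed.completeSpace_coe
  haveI : Nonempty S := ⟨⟨0, fun t => rfl⟩⟩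
  -- the contraction map
  have hcont : ∀ f : S, Continuous fun σ => b (Ψ σ) * ((f : ℝ → ℝ) (Ψ σ) - g (Ψ σ)) :=
    fun f => (hb.comp hΨ).mul (((f : BoundedContinuousFunction ℝ ℝ).continuous.comp hΨ).sub
      (hg.comp hΨ))
  have hper : ∀ f : S, Function.Periodic
      (fun σ => b (Ψ σ) * ((f : ℝ → ℝ) (Ψ σ) - g (Ψ σ))) T := by
    intro f σ
    simp only [hΨT σ, hbper (Ψ σ), f.2 (Ψ σ), hgper (Ψ σ)]
  set F : S → S := fun f =>
    ⟨pBCF hT _ (hcont f) (hper f), fun t => hper f t⟩ with hF_def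
  have hFapp : ∀ (f : S) (σ : ℝ), ((F f : BoundedContinuousFunction ℝ ℝ) : ℝ → ℝ) σ
      = b (Ψ σ) * ((f : ℝ → ℝ) (Ψ σ) - g (Ψ σ)) := fun f σ => rfl
  -- F is a contraction
  set K : NNReal := ⟨k, hk0⟩ with hK_def
  have hlip : LipschitzWith K F := by
    apply LipschitzWith.of_dist_le_mul
    intro f f'
    rw [Subtype.dist_eq, Subtype.dist_eq]
    have h0 : (0:ℝ) ≤ (K : ℝ) * dist (f : BoundedContinuousFunction ℝ ℝ) (f' : BoundedContinuousFunction ℝ ℝ) :=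
      mul_nonneg hk0 dist_nonneg
    rw [BoundedContinuousFunction.dist_le h0]
    intro σ
    rw [hFapp f σ, hFapp f' σ]
    have h1 : dist (b (Ψ σ) * ((f : ℝ → ℝ) (Ψ σ) - g (Ψ σ)))
        (b (Ψ σ) * ((f' : ℝ → ℝ) (Ψ σ) - g (Ψ σ)))
        = |b (Ψ σ)| * dist ((f : ℝ → ℝ) (Ψ σ) - g (Ψ σ)) ((f' : ℝ → ℝ) (Ψ σ) - g (Ψ σ)) := by
      rw [← smul_eq_mul, ← smul_eq_mul, dist_smul₀, Real.norm_eq_abs]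
    rw [h1, dist_sub_right, abs_of_pos (hbpos (Ψ σ))]
    exact mul_le_mul (hk (Ψ σ)) (BoundedContinuousFunction.dist_coe_le_dist (Ψ σ))
      dist_nonneg hk0
  have hC : ContractingWith K F := ⟨by rwa [← NNReal.coe_lt_coe, NNReal.coe_one], hlip⟩
  -- equivalence of the two formulations
  have equiv : ∀ v : ℝ → ℝ,
      (∀ σ, v σ = b (Ψ σ) * (v (Ψ σ) - g (Ψ σ))) ↔
      (∀ t, v t = a t * v (φ₂ (φ₁ t)) + g t) := by
    intro v
    constructor
    · intro h t
      have h1 := h (φ₂ (φ₁ t))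
      rw [hΨ₁ t] at h1
      have h2 : a t * v (φ₂ (φ₁ t)) = v t - g t := by
        rw [h1, hb_def, ← mul_assoc, mul_inv_cancel₀ (ha0 t), one_mul]
      linarith
    · intro h σ
      have h1 := h (Ψ σ)
      rw [hΨ₂ σ] at h1
      have h2 : v (Ψ σ) - g (Ψ σ) = a (Ψ σ) * v σ := by linarith
      rw [h2, hb_def, ← mul_assoc, inv_mul_cancel₀ (ha0 (Ψ σ)), one_mul]
  -- the fixed point
  set f₀ : S := ContractingWith.fixedPoint F hC with hf₀_def
  have hfix : F f₀ = f₀ := hC.fixedPoint_isFixedPt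
  set v : ℝ → ℝ := ((f₀ : BoundedContinuousFunction ℝ ℝ) : ℝ → ℝ) with hv_def
  have hveq : ∀ σ, v σ = b (Ψ σ) * (v (Ψ σ) - g (Ψ σ)) := by
    intro σ
    conv_lhs => rw [hv_def, ← hfix]
    exact hFapp f₀ σ
  have hvcont : Continuous v := (f₀ : BoundedContinuousFunction ℝ ℝ).continuous
  have hvper : Function.Periodic v T := fun t => f₀.2 t
  refine ⟨v, ⟨hvcont, hvper, (equiv v).mp hveq⟩, ?_⟩
  -- uniqueness
  rintro w ⟨hwc, hwp, hwe⟩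
  have hweq : ∀ σ, w σ = b (Ψ σ) * (w (Ψ σ) - g (Ψ σ)) := (equiv w).mpr hwe
  set w' : S := ⟨pBCF hT w hwc hwp, fun t => hwp t⟩ with hw'_def
  have hw'fix : Function.IsFixedPt F w' := by
    apply Subtype.ext
    apply BoundedContinuousFunction.ext
    intro σ
    rw [hFapp w' σ]
    exact (hweq σ).symm
  have : w' = f₀ := hC.fixedPoint_unique hw'fix
  have hcoe : ∀ σ, w σ = v σ := fun σ => by
    have := congrArg (fun f : S => ((f : BoundedContinuousFunction ℝ ℝ) : ℝ → ℝ) σ) this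
    simpa [hw'_def, hv_def] using this
  exact funext hcoe
end
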